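/- Let N be a binary normal network on X, and let {a,b} be a reticulated cherry of N with reticulation leaf b. Then for all x in X - {a,b}, the rooted triple ab|x is displayed by N. -/

import Mathlib

/-- A (candidate) rooted phylogenetic network structure: a directed graph on a
vertex type `V` with a distinguished root and a labelling of (intended) leaves
by elements of `X`.  The combinatorial axioms are imposed by predicates below. -/
structure Network (X : Type) where
  V : Type
  arc : V → V → Prop
  root : V
  leaf : X → V

namespace Network

variable {X : Type} (N : Network X)

def parents (v : N.V) : Set N.V := {u | N.arc u v}

def children (u : N.V) : Set N.V := {v | N.arc u v}

/-- in-degree 1, out-degree 2 -/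
def IsTreeVertex (v : N.V) : Prop := (N.parents v).ncard = 1 ∧ (N.children v).ncard = 2

/-- in-degree 2, out-degree 1 -/
def IsRetic (v : N.V) : Prop := (N.parents v).ncard = 2 ∧ (N.children v).ncard = 1

/-- in-degree 1, out-degree 0 -/
def IsLeafVertex (v : N.V) : Prop := (N.parents v).ncard = 1 ∧ (N.children v).ncard = 0

def Acyclic : Prop := ∀ v : N.V, ¬ Relation.TransGen N.arc v v

/-- A well-formed binary phylogenetic network (non-degenerate case): a finite
acyclic digraph with a root of in-degree 0 and out-degree 2, leaves of
in-degree 1 and out-degree 0 bijectively labelled by `X`, and all remaining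
vertices tree vertices or reticulations. -/
def Wf : Prop :=
  Finite N.V ∧ N.Acyclic ∧
  (N.parents N.root).ncard = 0 ∧ (N.children N.root).ncard = 2 ∧
  Function.Injective N.leaf ∧
  (∀ x : X, N.IsLeafVertex (N.leaf x)) ∧
  (∀ v : N.V, v = N.root ∨ (∃ x, N.leaf x = v) ∨ N.IsTreeVertex v ∨ N.IsRetic v)

/-- The degenerate network on a single leaf: one vertex, no arcs. -/
def Degenerate : Prop :=
  (∀ v : N.V, v = N.root) ∧ (∀ u v : N.V, ¬ N.arc u v) ∧
  (∃! _x : X, True) ∧ (∀ x : X, N.leaf x = N.root)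

def IsBinaryPhylo : Prop := N.Wf ∨ N.Degenerate

/-- `l` is a directed path (a list of successively adjacent vertices) from `u` to `v`. -/
def IsPathFromTo (l : List N.V) (u v : N.V) : Prop :=
  l.Chain' N.arc ∧ l.head? = some u ∧ l.getLast? = some v

/-- `v` is a descendant of `u` (equivalently, `u` is an ancestor of `v`). -/
def Desc (u v : N.V) : Prop := Relation.ReflTransGen N.arc u v

/-- The visibility set of `u`: those leaf labels `x` such that every directed
path from the root to the leaf labelled `x` traverses `u`. -/
def visSet (u : N.V) : Set X :=
  {x | ∀ l : List N.V, N.IsPathFromTo l N.root (N.leaf x) → u ∈ l}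

/-- The cluster set of `u`: leaf labels of leaves that are descendants of `u`. -/
def cluster (u : N.V) : Set X := {x | N.Desc u (N.leaf x)}

/-- A tree path from `u` to `t`: a directed path whose vertices other than the
endpoints are tree vertices. -/
def IsTreePath (l : List N.V) (u t : N.V) : Prop :=
  N.IsPathFromTo l u t ∧ ∀ v ∈ l, v ≠ u → v ≠ t → N.IsTreeVertex v

/-- Tree-child: every vertex with a child has a child that is a tree vertex or a leaf. -/
def TreeChild : Prop :=
  ∀ v : N.V, (∃ c, N.arc v c) → ∃ c, N.arc v c ∧ (N.IsTreeVertex c ∨ N.IsLeafVertex c)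

/-- Some reticulation arc `(u,v)` is a shortcut: there is a directed path from
`u` to `v` avoiding the arc `(u,v)`. -/
def HasShortcut : Prop :=
  ∃ u v, N.arc u v ∧ N.IsRetic v ∧ ∃ w, N.arc u w ∧ w ≠ v ∧ N.Desc w v

/-- Normal: tree-child with no shortcuts. -/
def IsNormal : Prop := N.TreeChild ∧ ¬ N.HasShortcut

def SiblingRetics (u v : N.V) : Prop :=
  u ≠ v ∧ N.IsRetic u ∧ N.IsRetic v ∧ ∃ p, N.arc p u ∧ N.arc p v

def StackRetics (u v : N.V) : Prop :=
  N.IsRetic u ∧ N.IsRetic v ∧ N.arc u v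

/-- `u` and `v` are near-sibling reticulations: some tree vertex `t` has as its
two children `v` and a tree vertex `s` that is a parent of `u`. -/
def NearSiblingRetics (u v : N.V) : Prop :=
  u ≠ v ∧ N.IsRetic u ∧ N.IsRetic v ∧
  ∃ t s, N.IsTreeVertex t ∧ N.IsTreeVertex s ∧ N.arc t s ∧ N.arc t v ∧ N.arc s u

/-- `u` and `v` are near-stack reticulations: the child of `u` is a tree vertex
that is a parent of `v`. -/
def NearStackRetics (u v : N.V) : Prop :=
  N.IsRetic u ∧ N.IsRetic v ∧ ∃ s, N.arc u s ∧ N.IsTreeVertex s ∧ N.arc s v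

def NoNearRetics : Prop :=
  (∀ u v, ¬ N.NearSiblingRetics u v) ∧ (∀ u v, ¬ N.NearStackRetics u v)

/-- `{a,b}` is a cherry: the leaves labelled `a` and `b` share a parent. -/
def Cherry (a b : X) : Prop :=
  a ≠ b ∧ ∃ p, N.arc p (N.leaf a) ∧ N.arc p (N.leaf b)

/-- `{a,b}` is a reticulated cherry with reticulation leaf `b`. -/
def ReticCherry (a b : X) : Prop :=
  a ≠ b ∧ ∃ pa pb, N.arc pa (N.leaf a) ∧ N.arc pb (N.leaf b) ∧
    N.IsRetic pb ∧ N.arc pa pb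

/-- `N` displays the rooted triple `xy|z`: there is a subdigraph of `N` that
is a subdivision of the rooted triple tree with `z` adjacent to the root,
i.e. vertices `p` (the root image) and `q` (the image of the parent of `x,y`)
together with internally disjoint directed paths as below. -/
def Displays (x y z : X) : Prop :=
  x ≠ y ∧ x ≠ z ∧ y ≠ z ∧
  ∃ (p q : N.V) (l0 lx ly lz : List N.V),
    p ≠ q ∧
    N.IsPathFromTo l0 p q ∧
    N.IsPathFromTo lx q (N.leaf x) ∧
    N.IsPathFromTo ly q (N.leaf y) ∧
    N.IsPathFromTo lz p (N.leaf z) ∧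
    (∀ v ∈ lx, v ∈ ly → v = q) ∧
    (∀ v ∈ l0, v ∈ lx ∨ v ∈ ly → v = q) ∧
    (∀ v ∈ lz, v ∈ l0 ∨ v ∈ lx ∨ v ∈ ly → v = p)

/-- `R(N)`: the set of rooted triples displayed by `N`, encoded as ordered
triples `(x, y, z)` standing for `xy|z`. -/
def RDisp : Set (X × X × X) := {t | N.Displays t.1 t.2.1 t.2.2}

/-- Isomorphism of networks on the same leaf set: a digraph isomorphism fixing
each leaf label. -/
def Isomorphic (N1 N2 : Network X) : Prop :=
  ∃ φ : N1.V ≃ N2.V,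
    (∀ u v, N1.arc u v ↔ N2.arc (φ u) (φ v)) ∧ (∀ x, φ (N1.leaf x) = N2.leaf x)

/-- A candidate set for `b` (relative to `a`): a non-empty subset
`W ⊆ X - {a,b}` satisfying conditions (W1)–(W5). -/
def CandidateSet (a b : X) (W : Set X) : Prop :=
  W.Nonempty ∧ a ∉ W ∧ b ∉ W ∧
  -- (W1)
  (∀ c ∈ W, ∀ x : X, x ∉ W → x ≠ b →
    N.Displays b c x ∧ ¬ N.Displays a c b) ∧
  -- (W2)
  (∀ c ∈ W, ∀ c' ∈ W, c ≠ c' → ¬ N.Displays b c c') ∧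
  -- (W3)
  (∀ c ∈ W, ∀ x : X, x ∉ W → x ≠ a → x ≠ b →
    (N.Displays c x a ↔ N.Displays b x a)) ∧
  -- (W4)
  (∀ x y : X, x ∉ W → x ≠ a → x ≠ b → y ∉ W → y ≠ a → y ≠ b →
    N.Displays b x y → ¬ N.Displays a x y → ∀ c ∈ W, N.Displays c x y) ∧
  -- (W5)
  (∀ c ∈ W, (∀ x : X, x ∉ W → x ≠ a → x ≠ b → N.Displays a c x) →
    ∀ x : X, x ∉ W → x ≠ a → x ≠ b → ¬ N.Displays a x c ∧ ¬ N.Displays a x b)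

end Network


section Aux

open Relation List

namespace Network

variable {X : Type} {N : Network X}

/-- From a chain list with given head and last, extract reachability. -/
lemma desc_of_chain : ∀ (l : List N.V) (u v : N.V), l.Chain' N.arc →
    l.head? = some u → l.getLast? = some v → N.Desc u v := by
  intro l
  induction l with
  | nil => intro u v _ h; simp at h
  | cons a t ih =>
    intro u v hc hh hl
    simp only [List.head?_cons, Option.some.injEq] at hh
    subst hh
    cases t with
    | nil =>
      simp only [List.getLast?_singleton, Option.some.injEq] at hl
      subst hl; exact Relation.ReflTransGen.refl
    | cons b t' =>
      have harc : N.arc a b := (List.isChain_cons_cons.mp hc).1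
      have hc' : (b :: t').Chain' N.arc := (List.isChain_cons_cons.mp hc).2
      have hl' : (b :: t').getLast? = some v := by
        rw [← hl]; exact (List.getLast?_cons_cons ..).symm
      exact Relation.ReflTransGen.head harc (ih b v hc' rfl hl')

lemma exists_suffix_head : ∀ (l : List N.V) (v : N.V), v ∈ l →
    ∃ l', l' <:+ l ∧ l'.head? = some v := by
  intro l
  induction l with
  | nil => intro v hv; simp at hv
  | cons a t ih =>
    intro v hv
    rcases List.mem_cons.mp hv with rfl | hv
    · exact ⟨_, List.suffix_refl _, rfl⟩
    · obtain ⟨l', hs, hh⟩ := ih v hv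
      exact ⟨l', hs.trans (List.suffix_cons a t), hh⟩

lemma desc_of_mem {l : List N.V} {v t : N.V} (hc : l.Chain' N.arc)
    (hl : l.getLast? = some t) (hv : v ∈ l) : N.Desc v t := by
  obtain ⟨l', hs, hh⟩ := exists_suffix_head l v hv
  have hne : l' ≠ [] := by rintro rfl; simp at hh
  refine desc_of_chain l' v t (hc.suffix hs) hh ?_
  obtain ⟨pre, rfl⟩ := hs
  rwa [List.getLast?_append_of_ne_nil _ hne] at hl

lemma getLast?_of_suffix {l l' : List N.V} (hs : l' <:+ l) (hne : l' ≠ []) :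
    l'.getLast? = l.getLast? := by
  obtain ⟨pre, rfl⟩ := hs
  exact (List.getLast?_append_of_ne_nil _ hne).symm

/-- Extract the maximal suffix whose head satisfies `C` and whose tail avoids `C`. -/
lemma exists_max_suffix (C : N.V → Prop) :
    ∀ (l : List N.V), (∃ v ∈ l, C v) →
    ∃ (l' : List N.V) (v : N.V), l' <:+ l ∧ l'.head? = some v ∧ C v ∧
      ∀ w ∈ l'.tail, ¬ C w := by
  intro l
  induction l with
  | nil => rintro ⟨v, hv, -⟩; simp at hv
  | cons a t ih =>
    intro hex
    by_cases ht : ∃ v ∈ t, C v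
    · obtain ⟨l', v, hs, hh, hC, htail⟩ := ih ht
      exact ⟨l', v, hs.trans (List.suffix_cons a t), hh, hC, htail⟩
    · have hCa : C a := by
        obtain ⟨v, hv, hCv⟩ := hex
        rcases List.mem_cons.mp hv with rfl | hv
        · exact hCv
        · exact absurd ⟨v, hv, hCv⟩ ht
      refine ⟨a :: t, a, List.suffix_refl _, rfl, hCa, ?_⟩
      intro w hw hCw
      exact ht ⟨w, hw, hCw⟩

/-- In a finite acyclic digraph where every non-root vertex has a parent,
every vertex is reachable from the root by a path. -/
lemma exists_path_from_root (hfin : Finite N.V) (hac : N.Acyclic)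
    (hpar : ∀ v : N.V, v ≠ N.root → ∃ u, N.arc u v) :
    ∀ v : N.V, ∃ l, N.IsPathFromTo l N.root v := by
  have hirr : IsIrrefl N.V (Relation.TransGen N.arc) := ⟨hac⟩
  have htr : IsTrans N.V (Relation.TransGen N.arc) := ⟨fun _ _ _ => Relation.TransGen.trans⟩
  have hwfT : WellFounded (Relation.TransGen N.arc) :=
    Finite.wellFounded_of_trans_of_irrefl _
  have hwf : WellFounded N.arc := Subrelation.wf (fun h => Relation.TransGen.single h) hwfT
  intro v
  induction v using hwf.induction with
  | _ v ih =>
    by_cases hv : v = N.root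
    · subst hv
      exact ⟨[N.root], List.isChain_singleton _, rfl, rfl⟩
    · obtain ⟨u, hu⟩ := hpar v hv
      obtain ⟨l, hc, hh, hl⟩ := ih u hu
      have hlne : l ≠ [] := by rintro rfl; simp at hh
      refine ⟨l ++ [v], ?_, ?_, ?_⟩
      · show List.IsChain _ _
        rw [List.isChain_append]
        refine ⟨hc, List.isChain_singleton _, ?_⟩
        intro x hx y hy
        rw [hl, Option.mem_some_iff] at hx
        simp only [List.head?_cons, Option.mem_some_iff] at hy
        subst hx; subst hy; exact hu
      · rw [List.head?_append_of_ne_nil _ hlne]; exact hh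
      · exact List.getLast?_concat

end Network

end Aux

/-- If `{a,b}` is a reticulated cherry of a binary normal network `N` with
reticulation leaf `b`, then `ab|x` is displayed by `N` for all `x ∈ X - {a,b}`. -/
theorem retic_cherry_displays_ab {X : Type} (N : Network X)
    (h : N.IsBinaryPhylo) (hn : N.IsNormal) (a b : X)
    (hrc : N.ReticCherry a b) :
    ∀ x : X, x ≠ a → x ≠ b → N.Displays a b x := by
  intro x hxa hxb
  obtain ⟨hab, pa, pb, hpaa, hpbb, hretic, hpapb⟩ := hrc
  rcases h with hwf | hdeg
  swap
  · exact absurd hpaa (hdeg.2.1 _ _)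
  obtain ⟨hfin, hac, hrp, hrc2, hinj, hleaf, hclass⟩ := hwf
  -- leaves have no children
  have noarc : ∀ (y : X) (c : N.V), ¬ N.arc (N.leaf y) c := by
    intro y c hc
    have he : N.children (N.leaf y) = ∅ :=
      (Set.ncard_eq_zero (Set.toFinite _)).mp (hleaf y).2
    exact absurd (he ▸ hc : c ∈ (∅ : Set N.V)) (Set.notMem_empty c)
  -- basic distinctness
  have hpbch : (N.children pb).ncard = 1 := hretic.2
  have hpbnl : ∀ y : X, pb ≠ N.leaf y := by
    intro y he
    rw [he, (hleaf y).2] at hpbch; exact one_ne_zero hpbch.symm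
  have hapb : N.leaf a ≠ pb := fun he => hpbnl a he.symm
  have hpapbne : pa ≠ pb := by
    intro he
    exact hac pb (Relation.TransGen.single (he ▸ hpapb))
  -- children of pa
  have hpach : (N.children pa).ncard = 2 := by
    rcases hclass pa with he | ⟨y, he⟩ | ht | hr
    · rw [he]; exact hrc2
    · exact absurd hpaa (he ▸ noarc y _)
    · exact ht.2
    · obtain ⟨c, hc⟩ := Set.ncard_eq_one.mp hr.2
      have h1 : N.leaf a = c := by
        have h' : N.leaf a ∈ N.children pa := hpaa
        rw [hc] at h'; simpa using h'
      have h2 : pb = c := by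
        have h' : pb ∈ N.children pa := hpapb
        rw [hc] at h'; simpa using h'
      exact absurd (h1.trans h2.symm) hapb
  have hpanl : ∀ y : X, pa ≠ N.leaf y := by
    intro y he
    rw [he, (hleaf y).2] at hpach; exact two_ne_zero hpach.symm
  have hchpa : ∀ w, N.arc pa w → w = N.leaf a ∨ w = pb := by
    obtain ⟨c, d, hcd, hset⟩ := Set.ncard_eq_two.mp hpach
    have hmem : ∀ w, N.arc pa w → w = c ∨ w = d := by
      intro w hw
      have : w ∈ N.children pa := hw
      rw [hset] at this; simpa using this
    have h1 := hmem _ hpaa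
    have h2 := hmem _ hpapb
    intro w hw
    rcases hmem w hw with h | h <;> rcases h1 with h1 | h1 <;> rcases h2 with h2 | h2 <;>
      first
        | (left; rw [h, ← h1])
        | (right; rw [h, ← h2])
        | (exact absurd (h1.trans h2.symm) hapb)
  have hchpb : ∀ w, N.arc pb w → w = N.leaf b := by
    obtain ⟨c, hc⟩ := Set.ncard_eq_one.mp hpbch
    intro w hw
    have h1 : N.leaf b = c := by
      have h' : N.leaf b ∈ N.children pb := hpbb
      rw [hc] at h'; simpa using h'
    have h2 : w = c := by
      have h' : w ∈ N.children pb := hw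
      rw [hc] at h'; simpa using h'
    rw [h2, ← h1]
  -- descendant structure of the cherry
  have hdescLB : ∀ t : N.V, N.Desc (N.leaf b) t → t = N.leaf b := by
    intro t h
    rcases Relation.ReflTransGen.cases_head h with he | ⟨c, hc, -⟩
    · exact he.symm
    · exact absurd hc (noarc b c)
  have hdescLA : ∀ t : N.V, N.Desc (N.leaf a) t → t = N.leaf a := by
    intro t h
    rcases Relation.ReflTransGen.cases_head h with he | ⟨c, hc, -⟩
    · exact he.symm
    · exact absurd hc (noarc a c)
  have hdescPB : ∀ t : N.V, N.Desc pb t → t = pb ∨ t = N.leaf b := by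
    intro t h
    rcases Relation.ReflTransGen.cases_head h with he | ⟨c, hc, hct⟩
    · exact Or.inl he.symm
    · rw [hchpb c hc] at hct
      exact Or.inr (hdescLB t hct)
  have hdescPA : ∀ t : N.V, N.Desc pa t →
      t = pa ∨ t = N.leaf a ∨ t = pb ∨ t = N.leaf b := by
    intro t h
    rcases Relation.ReflTransGen.cases_head h with he | ⟨c, hc, hct⟩
    · exact Or.inl he.symm
    · rcases hchpa c hc with rfl | rfl
      · exact Or.inr (Or.inl (hdescLA t hct))
      · rcases hdescPB t hct with h' | h'
        · exact Or.inr (Or.inr (Or.inl h'))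
        · exact Or.inr (Or.inr (Or.inr h'))
  have hlalb : N.leaf a ≠ N.leaf b := fun he => hab (hinj he)
  have hlxla : N.leaf x ≠ N.leaf a := fun he => hxa (hinj he)
  have hlxlb : N.leaf x ≠ N.leaf b := fun he => hxb (hinj he)
  -- none of the four cherry vertices is an ancestor of leaf x
  have hnotdesc : ∀ v : N.V,
      (v = pa ∨ v = N.leaf a ∨ v = pb ∨ v = N.leaf b) → ¬ N.Desc v (N.leaf x) := by
    rintro v (rfl | rfl | rfl | rfl) h
    · rcases hdescPA _ h with he | he | he | he
      · exact hpanl x he.symm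
      · exact hlxla he
      · exact hpbnl x he.symm
      · exact hlxlb he
    · exact hlxla (hdescLA _ h).symm.symm
    · rcases hdescPB _ h with he | he
      · exact hpbnl x he.symm
      · exact hlxlb he
    · exact hlxlb (hdescLB _ h)
  -- none of leaf a, pb, leaf b is an ancestor of pa
  have hnotanc : ∀ v : N.V,
      (v = N.leaf a ∨ v = pb ∨ v = N.leaf b) → ¬ N.Desc v pa := by
    rintro v (rfl | rfl | rfl) h
    · exact hpanl a (hdescLA _ h).symm.symm
    · rcases hdescPB _ h with he | he
      · exact hpapbne he
      · exact hpanl b he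
    · exact hpanl b (hdescLB _ h).symm.symm
  -- every non-root vertex has a parent
  have hpar : ∀ v : N.V, v ≠ N.root → ∃ u, N.arc u v := by
    intro v hv
    have hne : (N.parents v).ncard ≠ 0 := by
      rcases hclass v with he | ⟨y, he⟩ | ht | hr
      · exact absurd he hv
      · rw [← he, (hleaf y).1]; exact one_ne_zero
      · rw [ht.1]; exact one_ne_zero
      · rw [hr.1]; exact two_ne_zero
    exact Set.nonempty_of_ncard_ne_zero hne
  -- paths from the root
  obtain ⟨P, hPc, hPh, hPl⟩ := Network.exists_path_from_root hfin hac hpar (N.leaf x)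
  obtain ⟨Q, hQc, hQh, hQl⟩ := Network.exists_path_from_root hfin hac hpar pa
  have hrootP : N.root ∈ P := List.mem_of_mem_head? (hPh ▸ rfl)
  have hrootQ : N.root ∈ Q := List.mem_of_mem_head? (hQh ▸ rfl)
  obtain ⟨lz, p, hsz, hzh, hpQ, htail⟩ :=
    Network.exists_max_suffix (· ∈ Q) P ⟨N.root, hrootP, hrootQ⟩
  have hlzne : lz ≠ [] := by rintro rfl; simp at hzh
  have hlzc : lz.Chain' N.arc := hPc.suffix hsz
  have hlzl : lz.getLast? = some (N.leaf x) := by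
    rw [Network.getLast?_of_suffix hsz hlzne]; exact hPl
  have hdesclz : ∀ v ∈ lz, N.Desc v (N.leaf x) := fun v hv =>
    Network.desc_of_mem hlzc hlzl hv
  obtain ⟨l0, h0s, h0h⟩ := Network.exists_suffix_head Q p hpQ
  have h0ne : l0 ≠ [] := by rintro rfl; simp at h0h
  have h0c : l0.Chain' N.arc := hQc.suffix h0s
  have h0l : l0.getLast? = some pa := by
    rw [Network.getLast?_of_suffix h0s h0ne]; exact hQl
  have hdescQ : ∀ v ∈ Q, N.Desc v pa := fun v hv => Network.desc_of_mem hQc hQl hv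
  have hplz : p ∈ lz := List.mem_of_mem_head? (hzh ▸ rfl)
  have hppa : p ≠ pa := by
    intro he
    exact hnotdesc p (Or.inl he) (hdesclz p hplz)
  obtain ⟨tz, rfl⟩ : ∃ tz, lz = p :: tz := by
    cases lz with
    | nil => simp at hzh
    | cons a' t' =>
      simp only [List.head?_cons, Option.some.injEq] at hzh
      exact ⟨t', by rw [hzh]⟩
  -- assemble the display
  refine ⟨hab, Ne.symm hxa, Ne.symm hxb, p, pa, l0, [pa, N.leaf a], [pa, pb, N.leaf b],
    p :: tz, hppa, ⟨h0c, h0h, h0l⟩, ?_, ?_, ⟨hlzc, rfl, hlzl⟩, ?_, ?_, ?_⟩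
  · exact ⟨List.isChain_cons_cons.mpr ⟨hpaa, List.isChain_singleton _⟩, rfl, by simp⟩
  · exact ⟨List.isChain_cons_cons.mpr ⟨hpapb, List.isChain_cons_cons.mpr ⟨hpbb, List.isChain_singleton _⟩⟩,
      rfl, by simp⟩
  · -- lx ∩ ly ⊆ {pa}
    intro v hvx hvy
    simp only [List.mem_cons, List.not_mem_nil, or_false] at hvx hvy
    rcases hvx with rfl | rfl
    · rfl
    · rcases hvy with he | he | he
      · exact he
      · exact absurd he hapb
      · exact absurd he hlalb
  · -- l0 meets lx ∪ ly only in pa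
    intro v hv0 hvxy
    have hvQ : v ∈ Q := h0s.subset hv0
    have hda : N.Desc v pa := hdescQ v hvQ
    rcases hvxy with hvx | hvy
    · simp only [List.mem_cons, List.not_mem_nil, or_false] at hvx
      rcases hvx with rfl | rfl
      · rfl
      · exact absurd hda (hnotanc _ (Or.inl rfl))
    · simp only [List.mem_cons, List.not_mem_nil, or_false] at hvy
      rcases hvy with rfl | rfl | rfl
      · rfl
      · exact absurd hda (hnotanc _ (Or.inr (Or.inl rfl)))
      · exact absurd hda (hnotanc _ (Or.inr (Or.inr rfl)))
  · -- lz meets l0 ∪ lx ∪ ly only in p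
    intro v hvz hmem
    rcases List.mem_cons.mp hvz with rfl | hvt
    · rfl
    · have hvnQ : v ∉ Q := htail v hvt
      have hdx : N.Desc v (N.leaf x) := hdesclz v hvz
      rcases hmem with hv0 | hvx | hvy
      · exact absurd (h0s.subset hv0) hvnQ
      · simp only [List.mem_cons, List.not_mem_nil, or_false] at hvx
        rcases hvx with rfl | rfl
        · exact absurd hdx (hnotdesc _ (Or.inl rfl))
        · exact absurd hdx (hnotdesc _ (Or.inr (Or.inl rfl)))
      · simp only [List.mem_cons, List.not_mem_nil, or_false] at hvy
        rcases hvy with rfl | rfl | rfl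
        · exact absurd hdx (hnotdesc _ (Or.inl rfl))
        · exact absurd hdx (hnotdesc _ (Or.inr (Or.inr (Or.inl rfl))))
        · exact absurd hdx (hnotdesc _ (Or.inr (Or.inr (Or.inr rfl))))
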